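/- Let p₁, …, p_n be distinct points in the open disc D(0, 1/2) ⊂ ℂ and write p = (p₁, …, p_n). Then there exists ρ > 0 such that for each q = (q₁, …, q_n) with q_j ∈ D(p_j, ρ) for all j, there is a map ψ_q : 𝔻 → ℂ that is holomorphic and injective on the open unit disc 𝔻, such that: (1) ψ_q(q_j) = p_j for 1 ≤ j ≤ n; (2) ψ_p(z) = z for all z ∈ 𝔻; and (3) ψ_q depends continuously on q, i.e. the map (q, z) ↦ ψ_q(z) is continuous on (∏ⱼ D(p_j, ρ)) × 𝔻. -/

import Mathlib

open Set Metric

lemma norm_prod_sub_prod_le {ι : Type*} (s : Finset ι) (a b : ι → ℂ) (C : ℝ) (hC : 1 ≤ C)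
    (ha : ∀ i ∈ s, ‖a i‖ ≤ C) (hb : ∀ i ∈ s, ‖b i‖ ≤ C) :
    ‖∏ i ∈ s, a i - ∏ i ∈ s, b i‖ ≤ (∑ i ∈ s, ‖a i - b i‖) * C ^ s.card := by
  induction s using Finset.cons_induction with
  | empty => simp
  | cons i s his ih =>
    have ha' : ∀ j ∈ s, ‖a j‖ ≤ C := fun j hj => ha j (Finset.mem_cons_of_mem hj)
    have hb' : ∀ j ∈ s, ‖b j‖ ≤ C := fun j hj => hb j (Finset.mem_cons_of_mem hj)
    rw [Finset.prod_cons, Finset.prod_cons, Finset.sum_cons, Finset.card_cons]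
    have key : a i * ∏ j ∈ s, a j - b i * ∏ j ∈ s, b j
        = (a i - b i) * ∏ j ∈ s, a j + b i * (∏ j ∈ s, a j - ∏ j ∈ s, b j) := by ring
    rw [key]
    have h1 : ‖∏ j ∈ s, a j‖ ≤ C ^ s.card := by
      calc ‖∏ j ∈ s, a j‖ ≤ ∏ j ∈ s, ‖a j‖ := Finset.norm_prod_le _ _
        _ ≤ ∏ _j ∈ s, C := Finset.prod_le_prod (fun j _ => norm_nonneg _) ha'
        _ = C ^ s.card := by rw [Finset.prod_const]
    have hsum_nonneg : (0:ℝ) ≤ ∑ j ∈ s, ‖a j - b j‖ :=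
      Finset.sum_nonneg fun j _ => norm_nonneg _
    calc ‖(a i - b i) * ∏ j ∈ s, a j + b i * (∏ j ∈ s, a j - ∏ j ∈ s, b j)‖
        ≤ ‖(a i - b i) * ∏ j ∈ s, a j‖ + ‖b i * (∏ j ∈ s, a j - ∏ j ∈ s, b j)‖ :=
          norm_add_le _ _
      _ = ‖a i - b i‖ * ‖∏ j ∈ s, a j‖ + ‖b i‖ * ‖∏ j ∈ s, a j - ∏ j ∈ s, b j‖ := by
          rw [norm_mul, norm_mul]
      _ ≤ ‖a i - b i‖ * C ^ s.card + C * ((∑ j ∈ s, ‖a j - b j‖) * C ^ s.card) := by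
          have h2 := ih ha' hb'
          have hbi := hb i (Finset.mem_cons_self _ _)
          have hC0 : (0:ℝ) ≤ C := le_trans zero_le_one hC
          nlinarith [norm_nonneg (a i - b i), norm_nonneg (b i),
            norm_nonneg (∏ j ∈ s, a j - ∏ j ∈ s, b j), pow_nonneg hC0 s.card,
            mul_nonneg hsum_nonneg (pow_nonneg hC0 s.card)]
      _ ≤ (‖a i - b i‖ + ∑ j ∈ s, ‖a j - b j‖) * C ^ (s.card + 1) := by
          have hC0 : (0:ℝ) ≤ C := le_trans zero_le_one hC
          have hps : C ^ (s.card + 1) = C ^ s.card * C := pow_succ C s.card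
          nlinarith [pow_nonneg hC0 s.card, norm_nonneg (a i - b i),
            mul_nonneg (norm_nonneg (a i - b i)) (pow_nonneg hC0 s.card),
            mul_nonneg hsum_nonneg (pow_nonneg hC0 s.card)]

/-- Royden's lemma: given distinct points `p₁, …, pₙ` in the disc `D(0, 1/2)`, there
is a `ρ > 0` such that for every `q` with `qⱼ ∈ D(pⱼ, ρ)` there is a holomorphic
injection `ψ_q` of the unit disc with `ψ_q(qⱼ) = pⱼ`, `ψ_p = id`, and `ψ_q(z)`
depending continuously on `(q, z)`. -/
theorem royden_interpolation
    (n : ℕ) (p : Fin n → ℂ) (hinj : Function.Injective p)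
    (hp : ∀ j, p j ∈ Metric.ball (0 : ℂ) (1 / 2)) :
    ∃ ρ > 0, (∀ j, Metric.ball (p j) ρ ⊆ Metric.ball (0 : ℂ) 1) ∧
      ∃ Ψ : (Fin n → ℂ) → ℂ → ℂ,
        (∀ q : Fin n → ℂ, (∀ j, q j ∈ Metric.ball (p j) ρ) →
          DifferentiableOn ℂ (Ψ q) (Metric.ball (0 : ℂ) 1) ∧
          Set.InjOn (Ψ q) (Metric.ball (0 : ℂ) 1) ∧
          ∀ j, Ψ q (q j) = p j) ∧
        (∀ z ∈ Metric.ball (0 : ℂ) 1, Ψ p z = z) ∧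
        ContinuousOn (fun x : (Fin n → ℂ) × ℂ => Ψ x.1 x.2)
          ({q : Fin n → ℂ | ∀ j, q j ∈ Metric.ball (p j) ρ} ×ˢ Metric.ball (0 : ℂ) 1) := by
  classical
  -- a positive separation constant
  obtain ⟨δ, hδ0, hδ1, hδsep⟩ :
      ∃ δ : ℝ, 0 < δ ∧ δ ≤ 1 ∧ ∀ j k : Fin n, j ≠ k → δ ≤ dist (p j) (p k) := by
    rcases isEmpty_or_nonempty (Fin n) with h | h
    · exact ⟨1, one_pos, le_refl 1, fun j => (h.false j).elim⟩
    · have hne : (Finset.univ : Finset (Fin n × Fin n)).Nonempty := Finset.univ_nonempty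
      set f : Fin n × Fin n → ℝ := fun x => if x.1 = x.2 then 1 else dist (p x.1) (p x.2)
        with hf
      refine ⟨min (Finset.univ.inf' hne f) 1, ?_, min_le_right _ _, ?_⟩
      · refine lt_min ?_ one_pos
        rw [Finset.lt_inf'_iff]
        intro x _
        by_cases hx : x.1 = x.2
        · simp [hf, hx]
        · simpa [hf, hx] using dist_pos.2 fun e => hx (hinj e)
      · intro j k hjk
        have h1 : Finset.univ.inf' hne f ≤ f (j, k) := Finset.inf'_le f (Finset.mem_univ (j, k))
        have h2 : f (j, k) = dist (p j) (p k) := by simp [hf, hjk]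
        exact le_trans (min_le_left _ _) (h2 ▸ h1)
  set c : ℝ := δ / 2 with hc
  have hc0 : 0 < c := by positivity
  have hc1 : c ≤ 1 := by rw [hc]; linarith
  set K : ℝ := (n : ℝ) * n * 2 ^ n / c ^ n with hK
  have hK0 : 0 ≤ K := by positivity
  set ρ : ℝ := min (δ / 4) (min (1 / 4) (1 / (2 * K + 2))) with hρ
  have hρ0 : 0 < ρ := by
    refine lt_min (by positivity) (lt_min (by norm_num) (by positivity))
  have hρδ : ρ ≤ δ / 4 := min_le_left _ _
  have hρ4 : ρ ≤ 1 / 4 := le_trans (min_le_right _ _) (min_le_left _ _)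
  have hρK : ρ * K ≤ 1 / 2 := by
    have h1 : ρ ≤ 1 / (2 * K + 2) := le_trans (min_le_right _ _) (min_le_right _ _)
    have h2 : 0 < 2 * K + 2 := by positivity
    have h3 : ρ * (2 * K + 2) ≤ 1 := (le_div_iff₀ h2).mp h1
    nlinarith
  set N : (Fin n → ℂ) → Fin n → ℂ → ℂ :=
    fun q j z => ∏ k ∈ Finset.univ.erase j, (z - q k) with hN
  set D : (Fin n → ℂ) → Fin n → ℂ := fun q j => ∏ k ∈ Finset.univ.erase j, (q j - q k) with hD
  set Ψ : (Fin n → ℂ) → ℂ → ℂ := fun q z => z + ∑ j, (p j - q j) * N q j z / D q j with hΨ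
  -- basic facts for q in the region
  have hsep : ∀ q : Fin n → ℂ, (∀ j, q j ∈ Metric.ball (p j) ρ) →
      ∀ j k, j ≠ k → c ≤ ‖q j - q k‖ := by
    intro q hq j k hjk
    have h1 : δ ≤ dist (p j) (p k) := hδsep j k hjk
    have h2 : dist (p j) (p k) ≤ dist (p j) (q j) + dist (q j) (q k) + dist (q k) (p k) :=
      dist_triangle4 _ _ _ _
    have h3 : dist (p j) (q j) < ρ := by rw [dist_comm]; exact hq j
    have h4 : dist (q k) (p k) < ρ := hq k
    have : c ≤ dist (q j) (q k) := by
      rw [hc]; linarith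
    rwa [dist_eq_norm] at this
  have hDne : ∀ q : Fin n → ℂ, (∀ j, q j ∈ Metric.ball (p j) ρ) → ∀ j, D q j ≠ 0 := by
    intro q hq j
    rw [hD, Finset.prod_ne_zero_iff]
    intro k hk
    have hkj : k ≠ j := Finset.ne_of_mem_erase hk
    have := hsep q hq j k (Ne.symm hkj)
    intro h0
    rw [h0, norm_zero] at this
    linarith
  have hDlb : ∀ q : Fin n → ℂ, (∀ j, q j ∈ Metric.ball (p j) ρ) → ∀ j, c ^ n ≤ ‖D q j‖ := by
    intro q hq j
    have hcard : (Finset.univ.erase j).card ≤ n := by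
      calc (Finset.univ.erase j).card ≤ (Finset.univ : Finset (Fin n)).card :=
            Finset.card_le_card (Finset.erase_subset _ _)
        _ = n := by simp
    calc c ^ n ≤ c ^ (Finset.univ.erase j).card :=
          pow_le_pow_of_le_one hc0.le hc1 hcard
      _ = ∏ _k ∈ Finset.univ.erase j, c := (Finset.prod_const c).symm
      _ ≤ ∏ k ∈ Finset.univ.erase j, ‖q j - q k‖ := by
          refine Finset.prod_le_prod (fun k _ => hc0.le) (fun k hk => ?_)
          exact hsep q hq j k (Ne.symm (Finset.ne_of_mem_erase hk))
      _ = ‖D q j‖ := (norm_prod _ _).symm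
  have hqbound : ∀ q : Fin n → ℂ, (∀ j, q j ∈ Metric.ball (p j) ρ) → ∀ k, ‖q k‖ ≤ 3 / 4 := by
    intro q hq k
    have h1 : dist (q k) (p k) < ρ := hq k
    have h2 : dist (p k) 0 < 1 / 2 := hp k
    have := dist_triangle (q k) (p k) 0
    have : dist (q k) 0 ≤ dist (q k) (p k) + dist (p k) 0 := this
    simp only [dist_zero_right] at this h2
    linarith
  refine ⟨ρ, hρ0, ?_, Ψ, ?_, ?_, ?_⟩
  · -- balls inside the unit disc
    intro j x hx
    have h1 : dist x (p j) < ρ := hx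
    have h2 : dist (p j) 0 < 1 / 2 := hp j
    have h3 : dist x 0 ≤ dist x (p j) + dist (p j) 0 := dist_triangle _ _ _
    simp only [Metric.mem_ball]
    linarith
  · -- main properties for each q
    intro q hq
    refine ⟨?_, ?_, ?_⟩
    · -- differentiability
      apply Differentiable.differentiableOn
      apply differentiable_id.add
      apply Differentiable.fun_sum
      intro j _
      apply Differentiable.div_const
      apply Differentiable.const_mul
      apply Differentiable.fun_finsetProd
      intro k _
      exact differentiable_id.sub_const _
    · -- injectivity
      intro z hz w hw heq
      rw [Metric.mem_ball, dist_zero_right] at hz hw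
      have hzq : ∀ k, ‖z - q k‖ ≤ 2 := fun k => by
        have := hqbound q hq k
        calc ‖z - q k‖ ≤ ‖z‖ + ‖q k‖ := norm_sub_le _ _
          _ ≤ 2 := by linarith
      have hwq : ∀ k, ‖w - q k‖ ≤ 2 := fun k => by
        have := hqbound q hq k
        calc ‖w - q k‖ ≤ ‖w‖ + ‖q k‖ := norm_sub_le _ _
          _ ≤ 2 := by linarith
      have hkey : z - w = ∑ j, (p j - q j) * (N q j w - N q j z) / D q j := by
        have h1 : z + ∑ j, (p j - q j) * N q j z / D q j
            = w + ∑ j, (p j - q j) * N q j w / D q j := heq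
        have h2 : z - w = (∑ j, (p j - q j) * N q j w / D q j)
            - ∑ j, (p j - q j) * N q j z / D q j := by
          linear_combination h1
        rw [h2, ← Finset.sum_sub_distrib]
        exact Finset.sum_congr rfl fun j _ => by ring
      have hNlip : ∀ j, ‖N q j w - N q j z‖ ≤ (n : ℝ) * ‖w - z‖ * 2 ^ n := by
        intro j
        have hcard : (Finset.univ.erase j).card ≤ n := by
          calc (Finset.univ.erase j).card ≤ (Finset.univ : Finset (Fin n)).card :=
                Finset.card_le_card (Finset.erase_subset _ _)
            _ = n := by simp
        have hbase := norm_prod_sub_prod_le (Finset.univ.erase j)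
          (fun k => w - q k) (fun k => z - q k) 2 one_le_two
          (fun k _ => hwq k) (fun k _ => hzq k)
        have hsum : ∑ k ∈ Finset.univ.erase j, ‖(w - q k) - (z - q k)‖
            = (Finset.univ.erase j).card * ‖w - z‖ := by
          rw [Finset.sum_congr rfl (fun k _ => by rw [sub_sub_sub_cancel_right]),
            Finset.sum_const, nsmul_eq_mul]
        rw [hN]
        calc ‖(∏ k ∈ Finset.univ.erase j, (w - q k)) - ∏ k ∈ Finset.univ.erase j, (z - q k)‖
            ≤ ((Finset.univ.erase j).card * ‖w - z‖) * 2 ^ (Finset.univ.erase j).card := by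
              rw [← hsum]; exact hbase
          _ ≤ (n : ℝ) * ‖w - z‖ * 2 ^ n := by
              gcongr <;> first | exact_mod_cast hcard | norm_num
      have hterm : ∀ j, ‖(p j - q j) * (N q j w - N q j z) / D q j‖
          ≤ ρ * ((n : ℝ) * ‖w - z‖ * 2 ^ n) / c ^ n := by
        intro j
        rw [norm_div, norm_mul]
        have hpq : ‖p j - q j‖ ≤ ρ := by
          have := hq j
          rw [Metric.mem_ball, dist_eq_norm] at this
          rw [norm_sub_rev]
          exact this.le
        gcongr <;>
          first
            | positivity
            | exact hDlb q hq j
            | exact hNlip j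
            | exact hpq
      have hzw : ‖z - w‖ ≤ ρ * K * ‖z - w‖ := by
        calc ‖z - w‖ = ‖∑ j, (p j - q j) * (N q j w - N q j z) / D q j‖ := by rw [hkey]
          _ ≤ ∑ j, ‖(p j - q j) * (N q j w - N q j z) / D q j‖ := norm_sum_le _ _
          _ ≤ ∑ _j : Fin n, ρ * ((n : ℝ) * ‖w - z‖ * 2 ^ n) / c ^ n :=
              Finset.sum_le_sum fun j _ => hterm j
          _ = (n : ℝ) * (ρ * ((n : ℝ) * ‖w - z‖ * 2 ^ n) / c ^ n) := by
              rw [Finset.sum_const, Finset.card_univ, Fintype.card_fin, nsmul_eq_mul]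
          _ = ρ * K * ‖w - z‖ := by
              rw [hK]
              field_simp
          _ = ρ * K * ‖z - w‖ := by rw [norm_sub_rev]
      have hhalf : ρ * K * ‖z - w‖ ≤ (1 / 2) * ‖z - w‖ := by
        have := norm_nonneg (z - w)
        nlinarith
      have : ‖z - w‖ ≤ 0 := by linarith
      have : ‖z - w‖ = 0 := le_antisymm this (norm_nonneg _)
      exact sub_eq_zero.mp (norm_eq_zero.mp this)
    · -- interpolation
      intro i
      have hsum : ∑ j, (p j - q j) * N q j (q i) / D q j = p i - q i := by
        rw [Finset.sum_eq_single i]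
        · have : N q i (q i) = D q i := rfl
          rw [this, mul_div_assoc, div_self (hDne q hq i), mul_one]
        · intro j _ hji
          have hiN : N q j (q i) = 0 := by
            rw [hN]
            refine Finset.prod_eq_zero (Finset.mem_erase.2 ⟨Ne.symm hji, Finset.mem_univ i⟩) ?_
            simp
          rw [hiN, mul_zero, zero_div]
        · intro h
          exact absurd (Finset.mem_univ i) h
      show q i + ∑ j, (p j - q j) * N q j (q i) / D q j = p i
      rw [hsum]; ring
  · -- Ψ p = id
    intro z _
    show z + ∑ j, (p j - p j) * N p j z / D p j = z
    simp
  · -- continuity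
    apply ContinuousOn.add continuous_snd.continuousOn
    apply continuousOn_finset_sum
    intro j _
    apply ContinuousOn.div
    · apply Continuous.continuousOn
      apply Continuous.mul
      · exact continuous_const.sub ((continuous_apply j).comp continuous_fst)
      · apply continuous_finset_prod
        intro k _
        exact continuous_snd.sub ((continuous_apply k).comp continuous_fst)
    · apply Continuous.continuousOn
      apply continuous_finset_prod
      intro k _
      exact ((continuous_apply j).comp continuous_fst).sub
        ((continuous_apply k).comp continuous_fst)
    · intro x hx
      rw [Set.mem_prod] at hx
      exact hDne x.1 hx.1 j
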